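/- If the distance quantifier D additionally satisfies the triangle inequality D(ρ,σ) ≤ D(ρ,δ) + D(δ,σ) for all states ρ, σ, δ, then for every quantum channel N the resource boosting power satisfies R_b(N) ≤ R(N), where R(N) = min_{M∈RNG} D(N,M) is the channel-distance-based monotone. -/

import Mathlib

set_option linter.unusedVariables false

noncomputable section

open scoped BigOperators ComplexOrder

/-! ## Basic objects: states and channels -/

/-- Square complex matrices of size `d` (the observables/operators of a `d`-dimensional system). -/
abbrev Mat (d : ℕ) := Matrix (Fin d) (Fin d) ℂ

/-- A quantum state: a positive semidefinite matrix of trace one. -/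
def IsState {d : ℕ} (ρ : Mat d) : Prop := ρ.PosSemidef ∧ ρ.trace = 1

/-- Linear maps between matrix algebras. -/
abbrev MMap (a b : ℕ) := Mat a →ₗ[ℂ] Mat b

/-- The identity channel on an `e`-dimensional system. -/
def idMap (e : ℕ) : MMap e e := LinearMap.id

/-- The `(i,j)` slice of a bipartite matrix, as a linear map. -/
def matSlice {a c : ℕ} (i j : Fin a) :
    Matrix (Fin a × Fin c) (Fin a × Fin c) ℂ →ₗ[ℂ] Mat c where
  toFun X := Matrix.of fun k l => X (i, k) (j, l)
  map_add' _ _ := rfl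
  map_smul' _ _ := rfl

/-- Tensor product of matrix maps, on product index types. -/
def tensorAux {a b c d : ℕ} (N : MMap a b) (M : MMap c d) :
    Matrix (Fin a × Fin c) (Fin a × Fin c) ℂ →ₗ[ℂ]
      Matrix (Fin b × Fin d) (Fin b × Fin d) ℂ where
  toFun X := Matrix.of fun q q' =>
    ∑ p : Fin a × Fin a,
      N (Matrix.single p.1 p.2 1) q.1 q'.1 * M (matSlice p.1 p.2 X) q.2 q'.2
  map_add' X Y := by
    ext q q'
    simp [map_add, Matrix.add_apply, mul_add, Finset.sum_add_distrib]
  map_smul' r X := by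
    ext q q'
    simp only [Matrix.of_apply, map_smul, Matrix.smul_apply, smul_eq_mul, RingHom.id_apply,
      Finset.mul_sum]
    exact Finset.sum_congr rfl fun p _ => by ring

/-- Tensor product `N ⊗ M` of matrix maps. -/
def tensorMap {a b c d : ℕ} (N : MMap a b) (M : MMap c d) : MMap (a * c) (b * d) :=
  (Matrix.reindexLinearEquiv ℂ ℂ finProdFinEquiv finProdFinEquiv).toLinearMap ∘ₗ
    tensorAux N M ∘ₗ
      (Matrix.reindexLinearEquiv ℂ ℂ finProdFinEquiv.symm finProdFinEquiv.symm).toLinearMap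

/-- Positive maps: maps preserving positive semidefiniteness. -/
def IsPosMap {a b : ℕ} (N : MMap a b) : Prop :=
  ∀ X : Mat a, X.PosSemidef → (N X).PosSemidef

/-- Completely positive maps: `N ⊗ id_E` is positive for every ancilla dimension. -/
def IsCP {a b : ℕ} (N : MMap a b) : Prop :=
  IsPosMap N ∧ ∀ e : ℕ, IsPosMap (tensorMap N (idMap e))

/-- Trace-preserving maps. -/
def IsTP {a b : ℕ} (N : MMap a b) : Prop := ∀ X : Mat a, (N X).trace = X.trace

/-- A quantum channel: a completely positive trace-preserving linear map. -/
def IsChannel {a b : ℕ} (N : MMap a b) : Prop := IsCP N ∧ IsTP N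

/-- Tensor product of two matrices (Kronecker product, reindexed to `Fin (a*c)`). -/
def tensorState {a c : ℕ} (ρ : Mat a) (σ : Mat c) : Mat (a * c) :=
  Matrix.reindex finProdFinEquiv finProdFinEquiv (Matrix.kroneckerMap (· * ·) ρ σ)

/-- The `n`-fold tensor power of a matrix map. -/
def chanPow {a b : ℕ} (N : MMap a b) : (n : ℕ) → MMap (a ^ n) (b ^ n)
  | 0 => idMap 1
  | n + 1 => tensorMap (chanPow N n) N

/-- The `n`-fold tensor power of a matrix. -/
def statePow {d : ℕ} (ρ : Mat d) : (n : ℕ) → Mat (d ^ n)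
  | 0 => 1
  | n + 1 => tensorState (statePow ρ n) ρ

/-- The trace norm of a matrix, as the sum of its singular values. -/
def traceNorm {d : ℕ} (A : Mat d) : ℝ :=
  ∑ i, Real.sqrt ((Matrix.isHermitian_conjTranspose_mul_self A).eigenvalues i)

/-- The diamond-norm distance between two matrix maps. -/
def diamondDist {a b : ℕ} (N M : MMap a b) : ℝ :=
  sSup {x : ℝ | ∃ (e : ℕ) (ρ : Mat (a * e)), IsState ρ ∧
    x = traceNorm (tensorMap (N - M) (idMap e) ρ)}

/-! ## State resource theories -/

/-- A distance quantifier: a real number assigned to each pair of equal-dimension matrices. -/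
def DQ : Type := ∀ d : ℕ, Mat d → Mat d → ℝ

/-- The defining properties of a distance quantifier: nonnegativity and data processing. -/
structure IsDistanceQuantifier (D : DQ) : Prop where
  nonneg : ∀ (d : ℕ) (ρ σ : Mat d), IsState ρ → IsState σ → 0 ≤ D d ρ σ
  eq_zero : ∀ (d : ℕ) (ρ σ : Mat d), IsState ρ → IsState σ → ρ = σ → D d ρ σ = 0
  dpi : ∀ (a b : ℕ) (N : MMap a b), IsChannel N → ∀ ρ σ : Mat a,
    IsState ρ → IsState σ → D b (N ρ) (N σ) ≤ D a ρ σ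

/-- An assignment of a set of free states to each system. -/
def FreeStates : Type := ∀ d : ℕ, Set (Mat d)

structure IsFreeStates (Ω : FreeStates) : Prop where
  nonempty : ∀ d : ℕ, 0 < d → (Ω d).Nonempty
  isState : ∀ (d : ℕ) (ω : Mat d), ω ∈ Ω d → IsState ω

/-- Resource-nongenerating channels: `(N ⊗ id_E)(ω)` is free for every free `ω` and ancilla `E`. -/
def RNG (Ω : FreeStates) {a b : ℕ} (N : MMap a b) : Prop :=
  ∀ (e : ℕ) (ω : Mat (a * e)), ω ∈ Ω (a * e) →
    tensorMap N (idMap e) ω ∈ Ω (b * e)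

/-- An assignment of a set of free operations between each pair of systems. -/
def FreeOps : Type := ∀ a b : ℕ, Set (MMap a b)

structure IsFreeOps (Ω : FreeStates) (Φ : FreeOps) : Prop where
  channel : ∀ (a b : ℕ) (φ : MMap a b), φ ∈ Φ a b → IsChannel φ
  maps_free : ∀ (a b : ℕ) (φ : MMap a b), φ ∈ Φ a b → ∀ ω ∈ Ω a, φ ω ∈ Ω b
  tensor_id : ∀ (a b : ℕ) (φ : MMap a b), φ ∈ Φ a b →
    ∀ e : ℕ, tensorMap φ (idMap e) ∈ Φ (a * e) (b * e)

/-- Channel distance induced by a state distance quantifier (maximized over all input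
states together with an arbitrary ancilla). -/
def chanDist (D : DQ) {a b : ℕ} (N M : MMap a b) : ℝ :=
  sSup {x : ℝ | ∃ (e : ℕ) (ρ : Mat (a * e)), IsState ρ ∧
    x = D (b * e) (tensorMap N (idMap e) ρ) (tensorMap M (idMap e) ρ)}

/-- Free-state-restricted channel distance. -/
def chanDistFree (D : DQ) (Ω : FreeStates) {a b : ℕ} (N M : MMap a b) : ℝ :=
  sSup {x : ℝ | ∃ (e : ℕ) (ω : Mat (a * e)), ω ∈ Ω (a * e) ∧
    x = D (b * e) (tensorMap N (idMap e) ω) (tensorMap M (idMap e) ω)}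

/-- Distance-based channel resource monotone `R(N) = min_{M ∈ RNG} D(N, M)`. -/
def Rmon (D : DQ) (Ω : FreeStates) {a b : ℕ} (N : MMap a b) : ℝ :=
  sInf {x : ℝ | ∃ M : MMap a b, IsChannel M ∧ RNG Ω M ∧ x = chanDist D N M}

/-- Free-state-restricted channel resource monotone `R_Ω(N) = min_{M ∈ RNG} D_Ω(N, M)`. -/
def ROmega (D : DQ) (Ω : FreeStates) {a b : ℕ} (N : MMap a b) : ℝ :=
  sInf {x : ℝ | ∃ M : MMap a b, IsChannel M ∧ RNG Ω M ∧ x = chanDistFree D Ω N M}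

/-- The state resource monotone induced by a distance quantifier: `μ(ρ) = min_{ω ∈ Ω} D(ρ, ω)`. -/
def muDist (D : DQ) (Ω : FreeStates) (d : ℕ) (ρ : Mat d) : ℝ :=
  sInf {x : ℝ | ∃ ω ∈ Ω d, x = D d ρ ω}

/-- The resource generating power of a channel, for a state resource measure `μ`. -/
def RgOf (μ : ∀ d : ℕ, Mat d → ℝ) (Ω : FreeStates) {a b : ℕ} (N : MMap a b) : ℝ :=
  sSup {x : ℝ | ∃ (e : ℕ) (ω : Mat (a * e)), ω ∈ Ω (a * e) ∧
    x = μ (b * e) (tensorMap N (idMap e) ω)}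

/-- The resource boosting power of a channel, for a state resource measure `μ`. -/
def RbOf (μ : ∀ d : ℕ, Mat d → ℝ) {a b : ℕ} (N : MMap a b) : ℝ :=
  sSup {x : ℝ | ∃ (e : ℕ) (ρ : Mat (a * e)), IsState ρ ∧
    x = μ (b * e) (tensorMap N (idMap e) ρ) - μ (a * e) ρ}

/-! ## Super-operations and asymptotic rates -/

/-- `N'` is obtained from `N` by a free super-operation `N' = φ₁ ∘ (N ⊗ id) ∘ φ₂`. -/
def IsFreeTransform (Φ : FreeOps) {a b c c' : ℕ} (N : MMap a b) (N' : MMap c c') : Prop :=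
  ∃ (e : ℕ) (φ₁ : MMap (b * e) c') (φ₂ : MMap c (a * e)),
    φ₁ ∈ Φ (b * e) c' ∧ φ₂ ∈ Φ c (a * e) ∧
    N' = φ₁ ∘ₗ tensorMap N (idMap e) ∘ₗ φ₂

/-- `IterComp Φ N M n` : `M` is a sequential composition `Λ₁(N) ∘ ⋯ ∘ Λₙ(N)` of `n`
outputs of free super-operations applied to `N`. -/
inductive IterComp (Φ : FreeOps) {a b : ℕ} (N : MMap a b) :
    ∀ {c c' : ℕ}, MMap c c' → ℕ → Prop
  | single {c c' : ℕ} (N' : MMap c c') : IsFreeTransform Φ N N' → IterComp Φ N N' 1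
  | comp {c c' c'' : ℕ} (M : MMap c c') (N' : MMap c' c'') (n : ℕ) :
      IterComp Φ N M n → IsFreeTransform Φ N N' → IterComp Φ N (N' ∘ₗ M) (n + 1)

/-- A rate `R` is achievable for parallel distillation of `N` into channels from `𝔊`. -/
def DistillAchievable (Φ : FreeOps) {g g' : ℕ} (𝔊 : Set (MMap g g')) {a b : ℕ}
    (N : MMap a b) (R : ℝ) : Prop :=
  ∀ ε : ℝ, 0 < ε → ∃ n₀ : ℕ, ∀ n : ℕ, n₀ ≤ n →
    ∃ G ∈ 𝔊, ∃ N' : MMap (g ^ Nat.floor ((n : ℝ) * R)) (g' ^ Nat.floor ((n : ℝ) * R)),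
      IsFreeTransform Φ (chanPow N n) N' ∧
      diamondDist N' (chanPow G (Nat.floor ((n : ℝ) * R))) ≤ ε

/-- The parallel channel distillation rate. -/
def Rdistill (Φ : FreeOps) {g g' : ℕ} (𝔊 : Set (MMap g g')) {a b : ℕ} (N : MMap a b) : ℝ :=
  sSup {R : ℝ | 0 ≤ R ∧ DistillAchievable Φ 𝔊 N R}

/-- A rate `R` is achievable for parallel dilution of channels from `𝔊` into `N`. -/
def DiluteAchievable (Φ : FreeOps) {g g' : ℕ} (𝔊 : Set (MMap g g')) {a b : ℕ}
    (N : MMap a b) (R : ℝ) : Prop :=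
  ∀ ε : ℝ, 0 < ε → ∃ n₀ : ℕ, ∀ n : ℕ, n₀ ≤ n →
    ∃ G ∈ 𝔊, ∃ N' : MMap (a ^ n) (b ^ n),
      IsFreeTransform Φ (chanPow G (Nat.ceil ((n : ℝ) * R))) N' ∧
      diamondDist N' (chanPow N n) ≤ ε

/-- The parallel channel dilution rate. -/
def Rdilute (Φ : FreeOps) {g g' : ℕ} (𝔊 : Set (MMap g g')) {a b : ℕ} (N : MMap a b) : ℝ :=
  sInf {R : ℝ | 0 ≤ R ∧ DiluteAchievable Φ 𝔊 N R}

/-- A rate `R` is achievable for iterative distillation of `N`. -/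
def IterDistillAchievable (Φ : FreeOps) {g g' : ℕ} (𝔊 : Set (MMap g g')) {a b : ℕ}
    (N : MMap a b) (R : ℝ) : Prop :=
  ∀ ε : ℝ, 0 < ε → ∃ n₀ : ℕ, ∀ n : ℕ, n₀ ≤ n →
    ∃ G ∈ 𝔊, ∃ N' : MMap (g ^ Nat.floor ((n : ℝ) * R)) (g' ^ Nat.floor ((n : ℝ) * R)),
      IterComp Φ N N' n ∧
      diamondDist N' (chanPow G (Nat.floor ((n : ℝ) * R))) ≤ ε

/-- The iterative channel distillation rate. -/
def RdistillIter (Φ : FreeOps) {g g' : ℕ} (𝔊 : Set (MMap g g')) {a b : ℕ} (N : MMap a b) : ℝ :=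
  sSup {R : ℝ | 0 ≤ R ∧ IterDistillAchievable Φ 𝔊 N R}

/-- A rate `R` is achievable for iterative dilution of channels from `𝔊` into `N`. -/
def IterDiluteAchievable (Φ : FreeOps) {g g' : ℕ} (𝔊 : Set (MMap g g')) {a b : ℕ}
    (N : MMap a b) (R : ℝ) : Prop :=
  ∀ ε : ℝ, 0 < ε → ∃ n₀ : ℕ, ∀ n : ℕ, n₀ ≤ n →
    ∃ G ∈ 𝔊, ∃ N' : MMap (a ^ n) (b ^ n),
      IterComp Φ G N' (Nat.ceil ((n : ℝ) * R)) ∧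
      diamondDist N' (chanPow N n) ≤ ε

/-- The iterative channel dilution rate. -/
def RdiluteIter (Φ : FreeOps) {g g' : ℕ} (𝔊 : Set (MMap g g')) {a b : ℕ} (N : MMap a b) : ℝ :=
  sInf {R : ℝ | 0 ≤ R ∧ IterDiluteAchievable Φ 𝔊 N R}

/-- The constant channel that outputs the state `ρm` on every input. -/
def constChan (a : ℕ) {g : ℕ} (ρm : Mat g) : MMap a g where
  toFun X := X.trace • ρm
  map_add' X Y := by simp [Matrix.trace_add, add_smul]
  map_smul' r X := by simp [Matrix.trace_smul, smul_smul]

/-- The asymptotic state distillation rate (towards the maximal resource state `ρm`). -/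
def muDistill (Φ : FreeOps) {g : ℕ} (ρm : Mat g) (d : ℕ) (σ : Mat d) : ℝ :=
  sSup {R : ℝ | 0 ≤ R ∧ ∀ ε : ℝ, 0 < ε → ∃ n₀ : ℕ, ∀ n : ℕ, n₀ ≤ n →
    ∃ φ ∈ Φ (d ^ n) (g ^ Nat.floor ((n : ℝ) * R)),
      traceNorm (φ (statePow σ n) - statePow ρm (Nat.floor ((n : ℝ) * R))) ≤ ε}

/-- The asymptotic state dilution rate (from the maximal resource state `ρm`). -/
def muDilute (Φ : FreeOps) {g : ℕ} (ρm : Mat g) (d : ℕ) (σ : Mat d) : ℝ :=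
  sInf {R : ℝ | 0 ≤ R ∧ ∀ ε : ℝ, 0 < ε → ∃ n₀ : ℕ, ∀ n : ℕ, n₀ ≤ n →
    ∃ φ ∈ Φ (g ^ Nat.ceil ((n : ℝ) * R)) (d ^ n),
      traceNorm (φ (statePow ρm (Nat.ceil ((n : ℝ) * R))) - statePow σ n) ≤ ε}

/-! ## Coherence -/

/-- Incoherent (diagonal) matrices with respect to the computational basis. -/
def IsIncoherent {d : ℕ} (ρ : Mat d) : Prop := ∀ i j : Fin d, i ≠ j → ρ i j = 0

/-- Matrix logarithm via the continuous functional calculus. -/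
def matLog {d : ℕ} (A : Mat d) : Mat d := cfc Real.log A

/-- The quantum relative entropy `S(ρ‖σ) = Tr ρ (log ρ − log σ)`. -/
def relEnt {d : ℕ} (ρ σ : Mat d) : ℝ := ((ρ * (matLog ρ - matLog σ)).trace).re

/-- The relative entropy of coherence `C_r(ρ) = min_{δ incoherent} S(ρ‖δ)`. -/
def Cr {d : ℕ} (ρ : Mat d) : ℝ :=
  sInf {x : ℝ | ∃ δ : Mat d, IsState δ ∧ IsIncoherent δ ∧ x = relEnt ρ δ}

/-- Maximally incoherent operations: channels mapping incoherent states to incoherent states. -/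
def MIO : FreeOps := fun a b =>
  {M | IsChannel M ∧ ∀ δ : Mat a, IsState δ → IsIncoherent δ → IsIncoherent (M δ)}

/-- The coherence generating power of a channel. -/
def Crg {a b : ℕ} (N : MMap a b) : ℝ :=
  sSup {x : ℝ | ∃ (e : ℕ) (δ : Mat (a * e)), IsState δ ∧ IsIncoherent δ ∧
    x = Cr (tensorMap N (idMap e) δ)}

/-- The coherence boosting power of a channel. -/
def Crb {a b : ℕ} (N : MMap a b) : ℝ :=
  sSup {x : ℝ | ∃ (e : ℕ) (ρ : Mat (a * e)), IsState ρ ∧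
    x = Cr (tensorMap N (idMap e) ρ) - Cr ρ}

/-- `C_{r,I}(N)`: the free-state-restricted relative-entropy distance from `N` to MIO. -/
def CrI {a b : ℕ} (N : MMap a b) : ℝ :=
  sInf {x : ℝ | ∃ M : MMap a b, M ∈ MIO a b ∧
    x = sSup {y : ℝ | ∃ (e : ℕ) (δ : Mat (a * e)), IsState δ ∧ IsIncoherent δ ∧
      y = relEnt (tensorMap N (idMap e) δ) (tensorMap M (idMap e) δ)}}

/-- The maximally coherent qubit state `Ψ₂`. -/
def Psi2 : Mat 2 := Matrix.of fun _ _ => (1 / 2 : ℂ)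

/-- The optimal unit resource channel for coherence: the constant channel with output `Ψ₂`. -/
def Gstar : MMap 2 2 := constChan 2 Psi2

/-- The smooth max entropy of channel coherence. -/
def CmaxEps (ε : ℝ) {a b : ℕ} (N : MMap a b) : ℝ :=
  sInf {x : ℝ | ∃ N' : MMap a b, IsChannel N' ∧ diamondDist N N' ≤ ε ∧
    x = Real.log (sInf {l : ℝ | ∃ M ∈ MIO a b, IsCP ((l : ℂ) • M - N')})}


/-! ## Auxiliary lemmas for Statement 5 -/

theorem tensorMap_id_apply {a b : ℕ} (N : MMap a b) (e : ℕ) (X : Mat (a * e))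
    (q q' : Fin b × Fin e) :
    tensorMap N (idMap e) X (finProdFinEquiv q) (finProdFinEquiv q') =
      ∑ p : Fin a × Fin a, N (Matrix.single p.1 p.2 1) q.1 q'.1 *
        X (finProdFinEquiv (p.1, q.2)) (finProdFinEquiv (p.2, q'.2)) := by
  simp [tensorMap, tensorAux, idMap, matSlice, Matrix.reindexLinearEquiv_apply,
    Matrix.reindex_apply, Matrix.submatrix_apply, Equiv.symm_apply_apply]
  rfl

theorem trace_stdBasis {d : ℕ} (i j : Fin d) :
    (Matrix.single i j (1 : ℂ)).trace = if i = j then 1 else 0 := by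
  rcases eq_or_ne i j with rfl | h
  · rw [if_pos rfl, Matrix.trace_single_eq_same]
  · rw [if_neg h, Matrix.trace_single_eq_of_ne (h := h)]

theorem isTP_tensor_id {a b : ℕ} {N : MMap a b} (hN : IsTP N) (e : ℕ) :
    IsTP (tensorMap N (idMap e)) := by
  intro X
  have h1 : (tensorMap N (idMap e) X).trace =
      ∑ z : Fin b × Fin e, tensorMap N (idMap e) X (finProdFinEquiv z) (finProdFinEquiv z) :=
    (Equiv.sum_comp finProdFinEquiv _).symm
  have h2 : X.trace = ∑ z : Fin a × Fin e, X (finProdFinEquiv z) (finProdFinEquiv z) :=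
    (Equiv.sum_comp finProdFinEquiv _).symm
  rw [h1, h2]
  calc ∑ z : Fin b × Fin e, tensorMap N (idMap e) X (finProdFinEquiv z) (finProdFinEquiv z)
      = ∑ z : Fin b × Fin e, ∑ p : Fin a × Fin a,
          N (Matrix.single p.1 p.2 1) z.1 z.1 *
            X (finProdFinEquiv (p.1, z.2)) (finProdFinEquiv (p.2, z.2)) := by
        refine Finset.sum_congr rfl fun z _ => ?_
        exact tensorMap_id_apply N e X z z
    _ = ∑ p : Fin a × Fin a, ∑ z : Fin b × Fin e,
          N (Matrix.single p.1 p.2 1) z.1 z.1 *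
            X (finProdFinEquiv (p.1, z.2)) (finProdFinEquiv (p.2, z.2)) := Finset.sum_comm
    _ = ∑ p : Fin a × Fin a, (∑ z1 : Fin b, N (Matrix.single p.1 p.2 1) z1 z1) *
          (∑ z2 : Fin e, X (finProdFinEquiv (p.1, z2)) (finProdFinEquiv (p.2, z2))) := by
        refine Finset.sum_congr rfl fun p _ => ?_
        rw [Fintype.sum_prod_type, Finset.sum_mul]
        refine Finset.sum_congr rfl fun z1 _ => ?_
        rw [Finset.mul_sum]
    _ = ∑ p : Fin a × Fin a, (if p.1 = p.2 then (1:ℂ) else 0) *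
          (∑ z2 : Fin e, X (finProdFinEquiv (p.1, z2)) (finProdFinEquiv (p.2, z2))) := by
        refine Finset.sum_congr rfl fun p _ => ?_
        congr 1
        have : (∑ z1 : Fin b, N (Matrix.single p.1 p.2 1) z1 z1) =
            (N (Matrix.single p.1 p.2 1)).trace := rfl
        rw [this, hN, trace_stdBasis]
    _ = ∑ p1 : Fin a, ∑ z2 : Fin e, X (finProdFinEquiv (p1, z2)) (finProdFinEquiv (p1, z2)) := by
        rw [Fintype.sum_prod_type]
        refine Finset.sum_congr rfl fun p1 _ => ?_
        simp [Finset.sum_ite_eq, ite_mul, zero_mul]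
    _ = ∑ z : Fin a × Fin e, X (finProdFinEquiv z) (finProdFinEquiv z) := by
        rw [Fintype.sum_prod_type]

theorem isState_tensor_id {a b : ℕ} {N : MMap a b} (hN : IsChannel N) (e : ℕ)
    {ρ : Mat (a * e)} (hρ : IsState ρ) : IsState (tensorMap N (idMap e) ρ) :=
  ⟨hN.1.2 e ρ hρ.1, by rw [isTP_tensor_id hN.2 e ρ, hρ.2]⟩


theorem posSemidef_kron {m n : Type*} [Fintype m] [Fintype n]
    {s : Matrix m m ℂ} {A : Matrix n n ℂ} (hs : s.PosSemidef) (hA : A.PosSemidef) :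
    (Matrix.kroneckerMap (· * ·) s A).PosSemidef := by
  exact hs.kronecker hA

theorem posSemidef_smul' {n : Type*} [Fintype n] {A : Matrix n n ℂ} (hA : A.PosSemidef)
    {c : ℂ} (hc : 0 ≤ c) : (c • A).PosSemidef := by
  exact hA.smul hc

theorem psd_diag_nonneg {n : Type*} [Fintype n] [DecidableEq n] {A : Matrix n n ℂ}
    (hA : A.PosSemidef) (i : n) : 0 ≤ A i i := by
  exact hA.diag_nonneg

/-- The measure-and-prepare channel from a qubit: `X ↦ X₀₀ • s1 + X₁₁ • s2`. -/
def prep {d : ℕ} (s1 s2 : Mat d) : MMap 2 d where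
  toFun X := X 0 0 • s1 + X 1 1 • s2
  map_add' X Y := by
    simp only [Matrix.add_apply, add_smul]
    abel
  map_smul' r X := by
    simp only [Matrix.smul_apply, smul_eq_mul, mul_smul, RingHom.id_apply, smul_add]

theorem isState_stdBasis {d : ℕ} (i : Fin d) : IsState (Matrix.single i i (1:ℂ)) := by
  have hdiag : Matrix.single i i (1:ℂ) =
      Matrix.diagonal (fun j => if j = i then 1 else 0) := by
    ext k l
    rcases eq_or_ne k l with rfl | hkl
    · rcases eq_or_ne k i with rfl | hki
      · simp [Matrix.single_apply_same, Matrix.diagonal_apply_eq]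
      · rw [Matrix.single_apply_of_ne, Matrix.diagonal_apply_eq, if_neg hki]
        rintro ⟨rfl, -⟩; exact hki rfl
    · rw [Matrix.diagonal_apply_ne _ hkl, Matrix.single_apply_of_ne]
      rintro ⟨rfl, rfl⟩; exact hkl rfl
  constructor
  · rw [hdiag]
    refine Matrix.posSemidef_diagonal_iff.mpr fun j => ?_
    split_ifs
    · exact zero_le_one
    · exact le_refl 0
  · rw [hdiag, Matrix.trace_diagonal]
    simp


theorem prep_tensor_eq {d : ℕ} (s1 s2 : Mat d) (e : ℕ) (X : Mat (2 * e)) :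
    tensorMap (prep s1 s2) (idMap e) X =
      ((Matrix.kroneckerMap (· * ·) s1
          (X.submatrix (fun k => finProdFinEquiv ((0 : Fin 2), k))
            (fun k => finProdFinEquiv ((0 : Fin 2), k))) +
        Matrix.kroneckerMap (· * ·) s2
          (X.submatrix (fun k => finProdFinEquiv ((1 : Fin 2), k))
            (fun k => finProdFinEquiv ((1 : Fin 2), k)))).submatrix
        (finProdFinEquiv.symm : Fin (d * e) → Fin d × Fin e) finProdFinEquiv.symm) := by
  ext w w'
  have hw := (finProdFinEquiv.apply_symm_apply w).symm
  have hw' := (finProdFinEquiv.apply_symm_apply w').symm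
  rw [hw, hw', tensorMap_id_apply]
  simp only [Matrix.submatrix_apply, Equiv.symm_apply_apply]
  rw [Fintype.sum_prod_type, Fin.sum_univ_two, Fin.sum_univ_two, Fin.sum_univ_two]
  simp only [prep, LinearMap.coe_mk, AddHom.coe_mk, Matrix.single_apply_same,
    Matrix.add_apply, Matrix.smul_apply, Matrix.submatrix_apply, Matrix.kroneckerMap_apply,
    smul_eq_mul]
  rw [Matrix.single_apply_of_ne _ _ _ _ _ (by decide : ¬((0:Fin 2) = 1 ∧ (0:Fin 2) = 1)),
    Matrix.single_apply_of_ne _ _ _ _ _ (by decide : ¬((0:Fin 2) = 0 ∧ (1:Fin 2) = 0)),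
    Matrix.single_apply_of_ne _ _ _ _ _ (by decide : ¬((0:Fin 2) = 1 ∧ (1:Fin 2) = 1)),
    Matrix.single_apply_of_ne _ _ _ _ _ (by decide : ¬((1:Fin 2) = 0 ∧ (0:Fin 2) = 0)),
    Matrix.single_apply_of_ne _ _ _ _ _ (by decide : ¬((1:Fin 2) = 1 ∧ (0:Fin 2) = 1)),
    Matrix.single_apply_of_ne _ _ _ _ _ (by decide : ¬((1:Fin 2) = 0 ∧ (1:Fin 2) = 0))]
  ring

theorem prep_isChannel {d : ℕ} {s1 s2 : Mat d} (h1 : IsState s1) (h2 : IsState s2) :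
    IsChannel (prep s1 s2) := by
  have hpos : IsPosMap (prep s1 s2) := by
    intro X hX
    exact ((posSemidef_smul' h1.1 (psd_diag_nonneg hX 0)).add
      (posSemidef_smul' h2.1 (psd_diag_nonneg hX 1)))
  refine ⟨⟨hpos, fun e => ?_⟩, fun X => ?_⟩
  · intro X hX
    rw [prep_tensor_eq]
    refine Matrix.PosSemidef.submatrix ?_ _
    exact (posSemidef_kron h1.1 (hX.submatrix _)).add (posSemidef_kron h2.1 (hX.submatrix _))
  · show ((X 0 0 • s1) + (X 1 1 • s2)).trace = X.trace
    rw [Matrix.trace_add, Matrix.trace_smul, Matrix.trace_smul, h1.2, h2.2]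
    rw [Matrix.trace, Fin.sum_univ_two]
    simp [Matrix.diag]

theorem D_le_bound (D : DQ) (hD : IsDistanceQuantifier D) {d : ℕ} {s1 s2 : Mat d}
    (h1 : IsState s1) (h2 : IsState s2) :
    D d s1 s2 ≤ D 2 (Matrix.single 0 0 1) (Matrix.single 1 1 1) := by
  have hdpi := hD.dpi 2 d (prep s1 s2) (prep_isChannel h1 h2) _ _
    (isState_stdBasis 0) (isState_stdBasis 1)
  have e0 : prep s1 s2 (Matrix.single 0 0 1) = s1 := by
    show (Matrix.single (0:Fin 2) 0 (1:ℂ)) 0 0 • s1 +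
      (Matrix.single (0:Fin 2) 0 (1:ℂ)) 1 1 • s2 = s1
    rw [Matrix.single_apply_same,
      Matrix.single_apply_of_ne _ _ _ _ _ (by decide : ¬((0:Fin 2) = 1 ∧ (0:Fin 2) = 1))]
    simp
  have e1 : prep s1 s2 (Matrix.single 1 1 1) = s2 := by
    show (Matrix.single (1:Fin 2) 1 (1:ℂ)) 0 0 • s1 +
      (Matrix.single (1:Fin 2) 1 (1:ℂ)) 1 1 • s2 = s2
    rw [Matrix.single_apply_same,
      Matrix.single_apply_of_ne _ _ _ _ _ (by decide : ¬((1:Fin 2) = 0 ∧ (1:Fin 2) = 0))]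
    simp
  rwa [e0, e1] at hdpi


theorem tensor_id_stdBasis {a b e : ℕ} (M : MMap a b) (p p' : Fin a) (u u' : Fin e)
    (s1 s1' : Fin b) (s2 s2' : Fin e) :
    tensorMap M (idMap e) (Matrix.single (finProdFinEquiv (p, u))
        (finProdFinEquiv (p', u')) 1) (finProdFinEquiv (s1, s2)) (finProdFinEquiv (s1', s2')) =
      M (Matrix.single p p' 1) s1 s1' *
        ((if u = s2 then (1:ℂ) else 0) * (if u' = s2' then (1:ℂ) else 0)) := by
  rw [tensorMap_id_apply]
  have hentry : ∀ t : Fin a × Fin a,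
      (Matrix.single (finProdFinEquiv (p, u)) (finProdFinEquiv (p', u')) (1:ℂ))
        (finProdFinEquiv (t.1, s2)) (finProdFinEquiv (t.2, s2')) =
      (if p = t.1 then (1:ℂ) else 0) * (if p' = t.2 then (1:ℂ) else 0) *
        ((if u = s2 then (1:ℂ) else 0) * (if u' = s2' then (1:ℂ) else 0)) := by
    intro t
    show (if finProdFinEquiv (p, u) = finProdFinEquiv (t.1, s2) ∧
        finProdFinEquiv (p', u') = finProdFinEquiv (t.2, s2') then (1:ℂ) else 0) = _
    simp only [Equiv.apply_eq_iff_eq, Prod.ext_iff]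
    by_cases h1 : p = t.1 <;> by_cases h2 : p' = t.2 <;>
      by_cases h3 : u = s2 <;> by_cases h4 : u' = s2' <;>
      simp [h1, h2, h3, h4]
  calc (∑ t : Fin a × Fin a, M (Matrix.single t.1 t.2 1) s1 s1' *
        (Matrix.single (finProdFinEquiv (p, u)) (finProdFinEquiv (p', u')) (1:ℂ))
          (finProdFinEquiv (t.1, s2)) (finProdFinEquiv (t.2, s2')))
      = ∑ t : Fin a × Fin a, M (Matrix.single t.1 t.2 1) s1 s1' *
          ((if p = t.1 then (1:ℂ) else 0) * (if p' = t.2 then (1:ℂ) else 0) *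
            ((if u = s2 then (1:ℂ) else 0) * (if u' = s2' then (1:ℂ) else 0))) := by
        exact Finset.sum_congr rfl fun t _ => by rw [hentry t]
    _ = M (Matrix.single p p' 1) s1 s1' *
          ((if u = s2 then (1:ℂ) else 0) * (if u' = s2' then (1:ℂ) else 0)) := by
        rw [Fintype.sum_prod_type]
        rw [Finset.sum_eq_single p]
        · rw [Finset.sum_eq_single p']
          · simp
          · intro t2 _ ht2
            simp [Ne.symm ht2]
          · intro h; exact absurd (Finset.mem_univ p') h
        · intro t1 _ ht1
          rw [Finset.sum_eq_zero]
          intro t2 _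
          simp [Ne.symm ht1]
        · intro h; exact absurd (Finset.mem_univ p) h

theorem tensor_tensor_id_posMap {a b : ℕ} {M : MMap a b}
    (hM : ∀ f : ℕ, IsPosMap (tensorMap M (idMap f))) (e e' : ℕ) :
    IsPosMap (tensorMap (tensorMap M (idMap e)) (idMap e')) := by
  classical
  intro X hX
  set f : Fin (a * (e * e')) → Fin (a * e * e') := fun v =>
    finProdFinEquiv (finProdFinEquiv ((finProdFinEquiv.symm v).1,
      (finProdFinEquiv.symm ((finProdFinEquiv.symm v).2)).1),
      (finProdFinEquiv.symm ((finProdFinEquiv.symm v).2)).2) with hf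
  set g : Fin (b * e * e') → Fin (b * (e * e')) := fun w =>
    finProdFinEquiv ((finProdFinEquiv.symm ((finProdFinEquiv.symm w).1)).1,
      finProdFinEquiv ((finProdFinEquiv.symm ((finProdFinEquiv.symm w).1)).2,
        (finProdFinEquiv.symm w).2)) with hg
  have key : tensorMap (tensorMap M (idMap e)) (idMap e') X =
      (tensorMap M (idMap (e * e')) (X.submatrix f f)).submatrix g g := by
    ext w w'
    obtain ⟨s1, s2, k, hw⟩ : ∃ s1 s2 k, w = finProdFinEquiv (finProdFinEquiv (s1, s2), k) :=
      ⟨(finProdFinEquiv.symm ((finProdFinEquiv.symm w).1)).1,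
       (finProdFinEquiv.symm ((finProdFinEquiv.symm w).1)).2,
       (finProdFinEquiv.symm w).2, by
         simp only [Prod.mk.eta, Equiv.apply_symm_apply]⟩
    obtain ⟨s1', s2', k', hw'⟩ : ∃ s1 s2 k, w' = finProdFinEquiv (finProdFinEquiv (s1, s2), k) :=
      ⟨(finProdFinEquiv.symm ((finProdFinEquiv.symm w').1)).1,
       (finProdFinEquiv.symm ((finProdFinEquiv.symm w').1)).2,
       (finProdFinEquiv.symm w').2, by
         simp only [Prod.mk.eta, Equiv.apply_symm_apply]⟩
    subst hw hw'
    have hgw : ∀ (t1 : Fin b) (t2 : Fin e) (t3 : Fin e'),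
        g (finProdFinEquiv (finProdFinEquiv (t1, t2), t3)) =
          finProdFinEquiv (t1, finProdFinEquiv (t2, t3)) := by
      intro t1 t2 t3; simp only [hg, Equiv.symm_apply_apply]
    have hfv : ∀ (t1 : Fin a) (t2 : Fin e) (t3 : Fin e'),
        f (finProdFinEquiv (t1, finProdFinEquiv (t2, t3))) =
          finProdFinEquiv (finProdFinEquiv (t1, t2), t3) := by
      intro t1 t2 t3; simp only [hf, Equiv.symm_apply_apply]
    rw [Matrix.submatrix_apply, hgw, hgw,
      tensorMap_id_apply M (e * e') (X.submatrix f f) (s1, finProdFinEquiv (s2, k))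
        (s1', finProdFinEquiv (s2', k')),
      tensorMap_id_apply (tensorMap M (idMap e)) e' X (finProdFinEquiv (s1, s2), k)
        (finProdFinEquiv (s1', s2'), k')]
    have hL : (∑ r : Fin (a * e) × Fin (a * e),
        tensorMap M (idMap e) (Matrix.single r.1 r.2 1)
          (finProdFinEquiv (s1, s2)) (finProdFinEquiv (s1', s2')) *
          X (finProdFinEquiv (r.1, k)) (finProdFinEquiv (r.2, k'))) =
        ∑ ρ : (Fin a × Fin e) × (Fin a × Fin e),
          M (Matrix.single ρ.1.1 ρ.2.1 1) s1 s1' *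
            ((if ρ.1.2 = s2 then (1:ℂ) else 0) * (if ρ.2.2 = s2' then (1:ℂ) else 0)) *
            X (finProdFinEquiv (finProdFinEquiv ρ.1, k))
              (finProdFinEquiv (finProdFinEquiv ρ.2, k')) := by
      rw [← Equiv.sum_comp (Equiv.prodCongr finProdFinEquiv finProdFinEquiv)]
      refine Finset.sum_congr rfl fun ρ _ => ?_
      show tensorMap M (idMap e) (Matrix.single (finProdFinEquiv ρ.1)
          (finProdFinEquiv ρ.2) 1) _ _ * _ = _
      rw [tensor_id_stdBasis M ρ.1.1 ρ.2.1 ρ.1.2 ρ.2.2 s1 s1' s2 s2']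
      rfl
    rw [hL]
    rw [Fintype.sum_prod_type]
    have hcollapse : ∀ ρ1 : Fin a × Fin e,
        (∑ ρ2 : Fin a × Fin e,
          M (Matrix.single ρ1.1 ρ2.1 1) s1 s1' *
            ((if ρ1.2 = s2 then (1:ℂ) else 0) * (if ρ2.2 = s2' then (1:ℂ) else 0)) *
            X (finProdFinEquiv (finProdFinEquiv ρ1, k))
              (finProdFinEquiv (finProdFinEquiv ρ2, k'))) =
        (if ρ1.2 = s2 then (1:ℂ) else 0) * ∑ p2 : Fin a,
          M (Matrix.single ρ1.1 p2 1) s1 s1' *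
            X (finProdFinEquiv (finProdFinEquiv ρ1, k))
              (finProdFinEquiv (finProdFinEquiv (p2, s2'), k')) := by
      intro ρ1
      rw [Fintype.sum_prod_type, Finset.mul_sum]
      refine Finset.sum_congr rfl fun p2 _ => ?_
      rw [Finset.sum_eq_single s2']
      · simp
      · intro t _ ht; simp [ht]
      · intro h; exact absurd (Finset.mem_univ s2') h
    calc (∑ ρ1 : Fin a × Fin e, ∑ ρ2 : Fin a × Fin e,
          M (Matrix.single ρ1.1 ρ2.1 1) s1 s1' *
            ((if ρ1.2 = s2 then (1:ℂ) else 0) * (if ρ2.2 = s2' then (1:ℂ) else 0)) *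
            X (finProdFinEquiv (finProdFinEquiv ρ1, k))
              (finProdFinEquiv (finProdFinEquiv ρ2, k')))
        = ∑ ρ1 : Fin a × Fin e, (if ρ1.2 = s2 then (1:ℂ) else 0) * ∑ p2 : Fin a,
            M (Matrix.single ρ1.1 p2 1) s1 s1' *
              X (finProdFinEquiv (finProdFinEquiv ρ1, k))
                (finProdFinEquiv (finProdFinEquiv (p2, s2'), k')) :=
          Finset.sum_congr rfl fun ρ1 _ => hcollapse ρ1
      _ = ∑ p1 : Fin a, ∑ p2 : Fin a,
            M (Matrix.single p1 p2 1) s1 s1' *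
              X (finProdFinEquiv (finProdFinEquiv (p1, s2), k))
                (finProdFinEquiv (finProdFinEquiv (p2, s2'), k')) := by
          rw [Fintype.sum_prod_type]
          refine Finset.sum_congr rfl fun p1 _ => ?_
          rw [Finset.sum_eq_single s2]
          · simp
          · intro t _ ht; simp [ht]
          · intro h; exact absurd (Finset.mem_univ s2) h
      _ = ∑ p : Fin a × Fin a,
            M (Matrix.single p.1 p.2 1) s1 s1' *
              (X.submatrix f f) (finProdFinEquiv (p.1, finProdFinEquiv (s2, k)))
                (finProdFinEquiv (p.2, finProdFinEquiv (s2', k'))) := by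
          rw [Fintype.sum_prod_type]
          refine Finset.sum_congr rfl fun p1 _ => Finset.sum_congr rfl fun p2 _ => ?_
          rw [Matrix.submatrix_apply, hfv, hfv]
  rw [key]
  exact Matrix.PosSemidef.submatrix (hM (e * e') _ (hX.submatrix f)) g

/-- If the distance quantifier `D` additionally satisfies the triangle
inequality, then for every quantum channel `N` the resource boosting power satisfies
`R_b(N) ≤ R(N)`, where `R` is the channel-distance-based monotone (the set of RNG
channels being assumed nonempty). -/
theorem Rb_le_Rmon
    (D : DQ) (hD : IsDistanceQuantifier D) (Ω : FreeStates) (hΩ : IsFreeStates Ω)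
    (htriangle : ∀ (d : ℕ) (ρ σ δ : Mat d), IsState ρ → IsState σ → IsState δ →
      D d ρ σ ≤ D d ρ δ + D d δ σ) :
    ∀ (a b : ℕ) (N : MMap a b), IsChannel N →
      (∃ M : MMap a b, IsChannel M ∧ RNG Ω M) →
      RbOf (muDist D Ω) N ≤ Rmon D Ω N := by
  intro a b N hN hex
  have hRmonne : {x : ℝ | ∃ M : MMap a b, IsChannel M ∧ RNG Ω M ∧ x = chanDist D N M}.Nonempty := by
    obtain ⟨M, hMch, hMr⟩ := hex
    exact ⟨chanDist D N M, M, hMch, hMr, rfl⟩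
  refine le_csInf hRmonne ?_
  rintro x ⟨M, hMch, hMr, rfl⟩
  -- Every element of the channel-distance set is bounded by the universal constant.
  have hchanBdd : BddAbove {x : ℝ | ∃ (e : ℕ) (ρ : Mat (a * e)), IsState ρ ∧
      x = D (b * e) (tensorMap N (idMap e) ρ) (tensorMap M (idMap e) ρ)} := by
    refine ⟨D 2 (Matrix.single 0 0 1) (Matrix.single 1 1 1), ?_⟩
    rintro z ⟨e, ρ, hρ, rfl⟩
    exact D_le_bound D hD (isState_tensor_id hN e hρ) (isState_tensor_id hMch e hρ)
  have hchan_nonneg : (0:ℝ) ≤ chanDist D N M := by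
    refine Real.sSup_nonneg ?_
    rintro z ⟨e, ρ, hρ, rfl⟩
    exact hD.nonneg _ _ _ (isState_tensor_id hN e hρ) (isState_tensor_id hMch e hρ)
  refine Real.sSup_le ?_ hchan_nonneg
  rintro t ⟨e, ρ, hρ, rfl⟩
  -- dimensions are positive
  have hae : 0 < a * e := by
    rcases Nat.eq_zero_or_pos (a * e) with h | h
    · exfalso
      have : ρ.trace = 0 := by
        have hempty : IsEmpty (Fin (a * e)) := by rw [h]; infer_instance
        rw [Matrix.trace]
        exact Finset.sum_of_isEmpty _
      rw [hρ.2] at this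
      exact one_ne_zero this
    · exact h
  have hNρ : IsState (tensorMap N (idMap e) ρ) := isState_tensor_id hN e hρ
  have hMρ : IsState (tensorMap M (idMap e) ρ) := isState_tensor_id hMch e hρ
  have hMten : IsChannel (tensorMap M (idMap e)) :=
    ⟨⟨hMch.1.2 e, fun e' => tensor_tensor_id_posMap hMch.1.2 e e'⟩, isTP_tensor_id hMch.2 e⟩
  set dNM := D (b * e) (tensorMap N (idMap e) ρ) (tensorMap M (idMap e) ρ) with hdNM
  -- key inequality: μ(Nρ) ≤ dNM + μ(ρ)
  have hkey : muDist D Ω (b * e) (tensorMap N (idMap e) ρ) ≤ dNM + muDist D Ω (a * e) ρ := by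
    have hlow : muDist D Ω (b * e) (tensorMap N (idMap e) ρ) - dNM ≤ muDist D Ω (a * e) ρ := by
      refine le_csInf ?_ ?_
      · obtain ⟨ω, hω⟩ := hΩ.nonempty _ hae
        exact ⟨D (a * e) ρ ω, ω, hω, rfl⟩
      · rintro y ⟨ω, hω, rfl⟩
        have hωst := hΩ.isState _ ω hω
        have hMω : tensorMap M (idMap e) ω ∈ Ω (b * e) := hMr e ω hω
        have hMωst := hΩ.isState _ _ hMω
        have h1 : muDist D Ω (b * e) (tensorMap N (idMap e) ρ) ≤
            D (b * e) (tensorMap N (idMap e) ρ) (tensorMap M (idMap e) ω) := by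
          refine csInf_le ⟨0, ?_⟩ ⟨tensorMap M (idMap e) ω, hMω, rfl⟩
          rintro z ⟨ω', hω', rfl⟩
          exact hD.nonneg _ _ _ hNρ (hΩ.isState _ _ hω')
        have h2 : D (b * e) (tensorMap N (idMap e) ρ) (tensorMap M (idMap e) ω) ≤
            dNM + D (b * e) (tensorMap M (idMap e) ρ) (tensorMap M (idMap e) ω) :=
          htriangle _ _ _ _ hNρ hMωst hMρ
        have h3 : D (b * e) (tensorMap M (idMap e) ρ) (tensorMap M (idMap e) ω) ≤
            D (a * e) ρ ω := hD.dpi _ _ _ hMten ρ ω hρ hωst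
        linarith
    linarith
  have hdle : dNM ≤ chanDist D N M := le_csSup hchanBdd ⟨e, ρ, hρ, rfl⟩
  linarith


end
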